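/- Let t = (131 + 5·√745)/2928 (the positive root of 5856·t² − 524·t − 1 = 0), and set x = 54·t, s = 3/4 + 375·t, A = 76·t·s, g = 27·t·(1 + 128·t). Then x, s, A, g are positive and satisfy the six equations: −1/2 − x/2 − (3/4)·s/x − (A + g/3)/s = −170·t; 1/2 − x − g/x = −118·t; x/2 − (3/4)·s/x − (1/2)·g/x = −66·t; (1/2)·s/x − (2/9)·g/s − (2/3)·A/s = −14·t; (1/3)·g/s + (1/2)·g/x = 38·t; (1/2)·A/s = 38·t. -/

import Mathlib

theorem stmt_18 (t x s A g : ℝ)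
    (ht : t = (131 + 5 * Real.sqrt 745) / 2928)
    (hx : x = 54 * t) (hs : s = 3 / 4 + 375 * t) (hA : A = 76 * t * s)
    (hg : g = 27 * t * (1 + 128 * t)) :
    0 < x ∧ 0 < s ∧ 0 < A ∧ 0 < g ∧
    -1 / 2 - x / 2 - (3 / 4) * s / x - (A + g / 3) / s = -170 * t ∧
    1 / 2 - x - g / x = -118 * t ∧
    x / 2 - (3 / 4) * s / x - (1 / 2) * g / x = -66 * t ∧
    (1 / 2) * s / x - (2 / 9) * g / s - (2 / 3) * A / s = -14 * t ∧
    (1 / 3) * g / s + (1 / 2) * g / x = 38 * t ∧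
    (1 / 2) * A / s = 38 * t := by
  have hsq : Real.sqrt 745 ^ 2 = 745 := Real.sq_sqrt (by norm_num)
  have hsqpos : 0 < Real.sqrt 745 := Real.sqrt_pos.mpr (by norm_num)
  have ht0 : 0 < t := by rw [ht]; positivity
  have hquad : 5856 * t ^ 2 - 524 * t - 1 = 0 := by
    rw [ht]
    have : Real.sqrt 745 * Real.sqrt 745 = 745 := by nlinarith [hsq]
    nlinarith [this]
  have hx0 : 0 < x := by rw [hx]; linarith
  have hs0 : 0 < s := by rw [hs]; linarith
  have hA0 : 0 < A := by rw [hA]; positivity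
  have hg0 : 0 < g := by rw [hg]; positivity
  have hxn : x ≠ 0 := hx0.ne'
  have hsn : s ≠ 0 := hs0.ne'
  have htn : t ≠ 0 := ht0.ne'
  refine ⟨hx0, hs0, hA0, hg0, ?_, ?_, ?_, ?_, ?_, ?_⟩
  · subst hx hs hA hg
    have h54 : (54 : ℝ) * t ≠ 0 := by positivity
    have hss : (3 / 4 + 375 * t : ℝ) ≠ 0 := by positivity
    field_simp
    linear_combination (162 + 84888 * t) * hquad
  · subst hx hg; field_simp; ring
  · subst hx hs hg
    field_simp
    linear_combination 18 * hquad
  · subst hx hs hA hg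
    field_simp
    linear_combination (-243 - 115668 * t) * hquad
  · subst hx hs hg
    field_simp
    linear_combination (-243) * hquad
  · subst hs hA; field_simp; ring
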